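/- Let y = (y_1, y_2, y_3) be a triple of positive integers. Then y is minimally invariant (i.e., PA^inv_3(y) = {(1,1,1)}) if and only if y_1 < y_2, y_1 < y_3, and y_1 + y_3 ≠ y_2. -/

import Mathlib

open Classical in
/-- One car attempts to park on a one-way street with spots `1, …, m`: given the set
`occ` of occupied spots, the car with preference `p` and length `l` parks in spots
`j, j+1, …, j+l-1` for the least `j ≥ p` such that these spots all exist (are `≤ m`)
and are unoccupied; returns the new set of occupied spots, or `none` if parking fails. -/
noncomputable def parkOne (m : ℕ) (occ : Finset ℕ) (p l : ℕ) : Option (Finset ℕ) :=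
  if h : ∃ j, p ≤ j ∧ j + l ≤ m + 1 ∧ ∀ k ∈ Finset.Ico j (j + l), k ∉ occ then
    some (occ ∪ Finset.Ico (Nat.find h) (Nat.find h + l))
  else none

/-- Run the parking-assortment process for the cars `(preference, length)` in order. -/
noncomputable def parkList (m : ℕ) : List (ℕ × ℕ) → Finset ℕ → Option (Finset ℕ)
  | [], occ => some occ
  | c :: rest, occ => (parkOne m occ c.1 c.2).bind (parkList m rest)

/-- `x` is a parking assortment for the list of car lengths `y`. -/
def IsPA (y x : List ℕ) : Prop :=
  x.length = y.length ∧ (∀ a ∈ x, 1 ≤ a ∧ a ≤ y.sum) ∧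
    (parkList y.sum (x.zip y) ∅).isSome

/-- `PA y` is the set of parking assortments for `y`. -/
def PA (y : List ℕ) : Set (List ℕ) := {x | IsPA y x}

/-- `PAinv y` is the set of (permutation-)invariant parking assortments for `y`:
those preference lists all of whose rearrangements are parking assortments for `y`. -/
def PAinv (y : List ℕ) : Set (List ℕ) := {x | ∀ x', x'.Perm x → IsPA y x'}

/-- `y` is minimally invariant if the all-ones list is the only invariant
parking assortment for `y`. -/
def MinInv (y : List ℕ) : Prop := PAinv y = {List.replicate y.length 1}

lemma parkOne_eq_some (m : ℕ) (occ : Finset ℕ) (p l j : ℕ)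
    (h1 : p ≤ j) (h2 : j + l ≤ m + 1)
    (h3 : ∀ k ∈ Finset.Ico j (j + l), k ∉ occ)
    (hmin : ∀ j', p ≤ j' → j' < j → ∃ k, j' ≤ k ∧ k < j' + l ∧ k ∈ occ) :
    parkOne m occ p l = some (occ ∪ Finset.Ico j (j + l)) := by
  have hex : ∃ j, p ≤ j ∧ j + l ≤ m + 1 ∧ ∀ k ∈ Finset.Ico j (j + l), k ∉ occ :=
    ⟨j, h1, h2, h3⟩
  rw [parkOne, dif_pos hex]
  have hle : Nat.find hex ≤ j := Nat.find_min' hex ⟨h1, h2, h3⟩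
  have hge : j ≤ Nat.find hex := by
    by_contra h
    push_neg at h
    obtain ⟨hp, hf, hfree⟩ := Nat.find_spec hex
    obtain ⟨k, hk1, hk2, hk3⟩ := hmin _ hp h
    exact hfree k (Finset.mem_Ico.mpr ⟨hk1, hk2⟩) hk3
  rw [le_antisymm hle hge]

lemma parkOne_eq_none (m : ℕ) (occ : Finset ℕ) (p l : ℕ)
    (h : ∀ j, p ≤ j → j + l ≤ m + 1 → ∃ k, j ≤ k ∧ k < j + l ∧ k ∈ occ) :
    parkOne m occ p l = none := by
  rw [parkOne, dif_neg]
  rintro ⟨j, h1, h2, h3⟩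
  obtain ⟨k, hk1, hk2, hk3⟩ := h j h1 h2
  exact h3 k (Finset.mem_Ico.mpr ⟨hk1, hk2⟩) hk3

lemma parkOne_elim {m : ℕ} {occ : Finset ℕ} {p l : ℕ} {occ' : Finset ℕ}
    (h : parkOne m occ p l = some occ') :
    ∃ j, p ≤ j ∧ j + l ≤ m + 1 ∧ (∀ k, j ≤ k → k < j + l → k ∉ occ) ∧
      occ' = occ ∪ Finset.Ico j (j + l) ∧
      ∀ j', p ≤ j' → j' + l ≤ m + 1 → (∀ k, j' ≤ k → k < j' + l → k ∉ occ) → j ≤ j' := by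
  rw [parkOne] at h
  split_ifs at h with hex
  · obtain ⟨ha, hb, hc⟩ := Nat.find_spec hex
    refine ⟨Nat.find hex, ha, hb, fun k hk1 hk2 => hc k (Finset.mem_Ico.mpr ⟨hk1, hk2⟩),
      (Option.some_inj.mp h).symm, fun j' h1 h2 h3 =>
        Nat.find_min' hex ⟨h1, h2, fun k hk => h3 k (Finset.mem_Ico.mp hk).1 (Finset.mem_Ico.mp hk).2⟩⟩


lemma parkOne_empty_elim {m p l : ℕ} {o : Finset ℕ}
    (h : parkOne m ∅ p l = some o) :
    o = Finset.Ico p (p + l) ∧ p + l ≤ m + 1 := by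
  obtain ⟨j, hj1, hj2, _, ho, hmin⟩ := parkOne_elim h
  have hjp : j = p := by
    have := hmin p le_rfl (by omega) (fun k _ _ => Finset.notMem_empty k)
    omega
  subst hjp
  rw [ho, Finset.empty_union]
  exact ⟨rfl, hj2⟩

lemma key (y1 y2 y3 v s t : ℕ) (h1 : 0 < y1) (h2 : 0 < y2) (h3 : 0 < y3)
    (hv : 1 ≤ v) (hs : 1 ≤ s) (ht : 1 ≤ t)
    (hsome : (parkList (y1 + y2 + y3) [(v, y1), (s, y2), (t, y3)] ∅).isSome) :
    (v = 1 ∨ v = y2 + 1 ∨ v = y3 + 1 ∨ v = y2 + y3 + 1) ∧ (v = 1 ∨ s = 1 ∨ t = 1) := by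
  set m := y1 + y2 + y3 with hm
  rcases e1 : parkOne m ∅ v y1 with _ | o1
  · simp [parkList, e1] at hsome
  rcases e2 : parkOne m o1 s y2 with _ | o2
  · simp [parkList, e1, e2] at hsome
  rcases e3 : parkOne m o2 t y3 with _ | o3
  · simp [parkList, e1, e2, e3] at hsome
  obtain ⟨ho1, hfit1⟩ := parkOne_empty_elim e1
  subst ho1
  obtain ⟨j2, hj2, hfit2, hfree2, ho2, -⟩ := parkOne_elim e2
  obtain ⟨j3, hj3, hfit3, hfree3, ho3, -⟩ := parkOne_elim e3
  -- cardinality / coverage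
  have hd2 : Disjoint (Finset.Ico v (v + y1)) (Finset.Ico j2 (j2 + y2)) :=
    Finset.disjoint_right.mpr fun k hk => hfree2 k (Finset.mem_Ico.mp hk).1 (Finset.mem_Ico.mp hk).2
  have hd3 : Disjoint o2 (Finset.Ico j3 (j3 + y3)) :=
    Finset.disjoint_right.mpr fun k hk => hfree3 k (Finset.mem_Ico.mp hk).1 (Finset.mem_Ico.mp hk).2
  have hcard : o3.card = m := by
    rw [ho3, Finset.card_union_of_disjoint hd3, ho2, Finset.card_union_of_disjoint hd2]
    simp only [Nat.card_Ico]
    omega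
  have hsub : o3 ⊆ Finset.Ico 1 (m + 1) := by
    intro k hk
    rw [ho3, ho2] at hk
    simp only [Finset.mem_union, Finset.mem_Ico] at hk ⊢
    omega
  have hcov0 : o3 = Finset.Ico 1 (m + 1) :=
    Finset.eq_of_subset_of_card_le hsub (by rw [Nat.card_Ico, hcard]; omega)
  have hcov : ∀ k, 1 ≤ k → k ≤ m →
      (v ≤ k ∧ k < v + y1) ∨ (j2 ≤ k ∧ k < j2 + y2) ∨ (j3 ≤ k ∧ k < j3 + y3) := by
    intro k hk1 hk2
    have : k ∈ o3 := by rw [hcov0]; exact Finset.mem_Ico.mpr ⟨hk1, by omega⟩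
    rw [ho3, ho2] at this
    simp only [Finset.mem_union, Finset.mem_Ico] at this
    omega
  -- disjointness in arithmetic form
  have hf2 : ∀ k, j2 ≤ k → k < j2 + y2 → ¬(v ≤ k ∧ k < v + y1) := by
    intro k hk1 hk2 hk3
    exact hfree2 k hk1 hk2 (Finset.mem_Ico.mpr hk3)
  have hf3 : ∀ k, j3 ≤ k → k < j3 + y3 →
      ¬((v ≤ k ∧ k < v + y1) ∨ (j2 ≤ k ∧ k < j2 + y2)) := by
    intro k hk1 hk2 hk3
    apply hfree3 k hk1 hk2
    rw [ho2]
    simpa only [Finset.mem_union, Finset.mem_Ico] using hk3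
  have E2 := hf2 (max v j2)
  have E3a := hf3 (max v j3)
  have E3b := hf3 (max j2 j3)
  have A := hcov (v - 1)
  have B := hcov (j2 - 1)
  have C := hcov (j3 - 1)
  have D := hcov 1
  omega

lemma parkOne_empty (m p l : ℕ) (hfit : p + l ≤ m + 1) :
    parkOne m ∅ p l = some (Finset.Ico p (p + l)) := by
  have := parkOne_eq_some m ∅ p l p le_rfl hfit (fun k _ => Finset.notMem_empty k)
    (fun j' ha hb => absurd ha (by omega))
  rwa [Finset.empty_union] at this

lemma isPA_of (y1 y2 y3 p1 p2 p3 : ℕ)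
    (hb1 : 1 ≤ p1 ∧ p1 ≤ y1 + y2 + y3) (hb2 : 1 ≤ p2 ∧ p2 ≤ y1 + y2 + y3)
    (hb3 : 1 ≤ p3 ∧ p3 ≤ y1 + y2 + y3)
    (h : (parkList (y1 + y2 + y3) [(p1, y1), (p2, y2), (p3, y3)] ∅).isSome) :
    IsPA [y1, y2, y3] [p1, p2, p3] := by
  refine ⟨rfl, ?_, ?_⟩
  · intro a ha
    simp only [List.mem_cons, List.not_mem_nil, or_false] at ha
    simp only [List.sum_cons, List.sum_nil]
    rcases ha with rfl | rfl | rfl <;> omega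
  · have hz : ([p1, p2, p3].zip [y1, y2, y3]) = [(p1, y1), (p2, y2), (p3, y3)] := rfl
    have hs : ([y1, y2, y3] : List ℕ).sum = y1 + y2 + y3 := by
      simp only [List.sum_cons, List.sum_nil]; omega
    rw [hz, hs]
    exact h

lemma isPA_isSome {y x : List ℕ} (h : IsPA y x) :
    (parkList y.sum (x.zip y) ∅).isSome := h.2.2

-- success scenario S0 : all ones
lemma S0 (y1 y2 y3 : ℕ) (h1 : 0 < y1) (h2 : 0 < y2) (h3 : 0 < y3) :
    IsPA [y1, y2, y3] [1, 1, 1] := by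
  set m := y1 + y2 + y3 with hm
  have e1 : parkOne m ∅ 1 y1 = some (Finset.Ico 1 (1 + y1)) :=
    parkOne_empty m 1 y1 (by omega)
  have e2 : parkOne m (Finset.Ico 1 (1 + y1)) 1 y2 =
      some (Finset.Ico 1 (1 + y1) ∪ Finset.Ico (y1 + 1) (y1 + 1 + y2)) := by
    apply parkOne_eq_some m _ 1 y2 (y1 + 1) (by omega) (by omega)
    · intro k hk
      simp only [Finset.mem_Ico] at hk ⊢
      omega
    · intro j' ha hb
      exact ⟨j', by omega, by omega, by simp only [Finset.mem_Ico]; omega⟩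
  have e3 : parkOne m (Finset.Ico 1 (1 + y1) ∪ Finset.Ico (y1 + 1) (y1 + 1 + y2)) 1 y3 =
      some ((Finset.Ico 1 (1 + y1) ∪ Finset.Ico (y1 + 1) (y1 + 1 + y2)) ∪
        Finset.Ico (y1 + y2 + 1) (y1 + y2 + 1 + y3)) := by
    apply parkOne_eq_some m _ 1 y3 (y1 + y2 + 1) (by omega) (by omega)
    · intro k hk
      simp only [Finset.mem_union, Finset.mem_Ico] at hk ⊢
      omega
    · intro j' ha hb
      exact ⟨j', by omega, by omega, by simp only [Finset.mem_union, Finset.mem_Ico]; omega⟩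
  apply isPA_of <;> try (constructor <;> omega)
  simp [parkList, ← hm, e1, e2, e3]

lemma not_isPA (y1 y2 y3 p1 p2 p3 : ℕ)
    (hn : parkList (y1 + y2 + y3) [(p1, y1), (p2, y2), (p3, y3)] ∅ = none) :
    ¬ IsPA [y1, y2, y3] [p1, p2, p3] := by
  intro h
  have hh := h.2.2
  have hz : ([p1, p2, p3].zip [y1, y2, y3]) = [(p1, y1), (p2, y2), (p3, y3)] := rfl
  have hs : ([y1, y2, y3] : List ℕ).sum = y1 + y2 + y3 := by
    simp only [List.sum_cons, List.sum_nil]; omega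
  rw [hz, hs, hn] at hh
  simp at hh

section Scenarios
variable (y1 y2 y3 : ℕ)

-- standard first two steps when prefs are 1,1 (or 1,p2 with p2 ≤ y1+1)
lemma S1a (h1 : 0 < y1) (h2 : 0 < y2) (h3 : 0 < y3) (hc1 : 1 ≤ y2 + 1) :
    IsPA [y1, y2, y3] [1, 1, y2 + 1] := by
  set m := y1 + y2 + y3 with hm
  have e1 : parkOne m ∅ 1 y1 = some (Finset.Ico 1 (1 + y1)) := parkOne_empty m 1 y1 (by omega)
  have e2 : parkOne m (Finset.Ico 1 (1 + y1)) 1 y2 =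
      some (Finset.Ico 1 (1 + y1) ∪ Finset.Ico (y1 + 1) (y1 + 1 + y2)) := by
    apply parkOne_eq_some m _ 1 y2 (y1 + 1) (by omega) (by omega)
    · intro k hk; simp only [Finset.mem_Ico] at hk ⊢; omega
    · intro j' ha hb
      exact ⟨j', by omega, by omega, by simp only [Finset.mem_Ico]; omega⟩
  have e3 : parkOne m (Finset.Ico 1 (1 + y1) ∪ Finset.Ico (y1 + 1) (y1 + 1 + y2)) (y2 + 1) y3 =
      some ((Finset.Ico 1 (1 + y1) ∪ Finset.Ico (y1 + 1) (y1 + 1 + y2)) ∪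
        Finset.Ico (y1 + y2 + 1) (y1 + y2 + 1 + y3)) := by
    apply parkOne_eq_some m _ (y2 + 1) y3 (y1 + y2 + 1) (by omega) (by omega)
    · intro k hk; simp only [Finset.mem_union, Finset.mem_Ico] at hk ⊢; omega
    · intro j' ha hb
      exact ⟨j', by omega, by omega, by simp only [Finset.mem_union, Finset.mem_Ico]; omega⟩
  apply isPA_of <;> try (constructor <;> omega)
  simp [parkList, ← hm, e1, e2, e3]

lemma S2a (h1 : 0 < y1) (h2 : 0 < y2) (h3 : 0 < y3) (hy31 : y3 ≤ y1) :
    IsPA [y1, y2, y3] [1, 1, y3 + 1] := by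
  set m := y1 + y2 + y3 with hm
  have e1 : parkOne m ∅ 1 y1 = some (Finset.Ico 1 (1 + y1)) := parkOne_empty m 1 y1 (by omega)
  have e2 : parkOne m (Finset.Ico 1 (1 + y1)) 1 y2 =
      some (Finset.Ico 1 (1 + y1) ∪ Finset.Ico (y1 + 1) (y1 + 1 + y2)) := by
    apply parkOne_eq_some m _ 1 y2 (y1 + 1) (by omega) (by omega)
    · intro k hk; simp only [Finset.mem_Ico] at hk ⊢; omega
    · intro j' ha hb
      exact ⟨j', by omega, by omega, by simp only [Finset.mem_Ico]; omega⟩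
  have e3 : parkOne m (Finset.Ico 1 (1 + y1) ∪ Finset.Ico (y1 + 1) (y1 + 1 + y2)) (y3 + 1) y3 =
      some ((Finset.Ico 1 (1 + y1) ∪ Finset.Ico (y1 + 1) (y1 + 1 + y2)) ∪
        Finset.Ico (y1 + y2 + 1) (y1 + y2 + 1 + y3)) := by
    apply parkOne_eq_some m _ (y3 + 1) y3 (y1 + y2 + 1) (by omega) (by omega)
    · intro k hk; simp only [Finset.mem_union, Finset.mem_Ico] at hk ⊢; omega
    · intro j' ha hb
      exact ⟨j', by omega, by omega, by simp only [Finset.mem_union, Finset.mem_Ico]; omega⟩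
  apply isPA_of <;> try (constructor <;> omega)
  simp [parkList, ← hm, e1, e2, e3]

lemma S1b (h1 : 0 < y1) (h2 : 0 < y2) (h3 : 0 < y3) (hy21 : y2 ≤ y1) :
    IsPA [y1, y2, y3] [1, y2 + 1, 1] := by
  set m := y1 + y2 + y3 with hm
  have e1 : parkOne m ∅ 1 y1 = some (Finset.Ico 1 (1 + y1)) := parkOne_empty m 1 y1 (by omega)
  have e2 : parkOne m (Finset.Ico 1 (1 + y1)) (y2 + 1) y2 =
      some (Finset.Ico 1 (1 + y1) ∪ Finset.Ico (y1 + 1) (y1 + 1 + y2)) := by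
    apply parkOne_eq_some m _ (y2 + 1) y2 (y1 + 1) (by omega) (by omega)
    · intro k hk; simp only [Finset.mem_Ico] at hk ⊢; omega
    · intro j' ha hb
      exact ⟨j', by omega, by omega, by simp only [Finset.mem_Ico]; omega⟩
  have e3 : parkOne m (Finset.Ico 1 (1 + y1) ∪ Finset.Ico (y1 + 1) (y1 + 1 + y2)) 1 y3 =
      some ((Finset.Ico 1 (1 + y1) ∪ Finset.Ico (y1 + 1) (y1 + 1 + y2)) ∪
        Finset.Ico (y1 + y2 + 1) (y1 + y2 + 1 + y3)) := by
    apply parkOne_eq_some m _ 1 y3 (y1 + y2 + 1) (by omega) (by omega)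
    · intro k hk; simp only [Finset.mem_union, Finset.mem_Ico] at hk ⊢; omega
    · intro j' ha hb
      exact ⟨j', by omega, by omega, by simp only [Finset.mem_union, Finset.mem_Ico]; omega⟩
  apply isPA_of <;> try (constructor <;> omega)
  simp [parkList, ← hm, e1, e2, e3]

lemma S2b (h1 : 0 < y1) (h2 : 0 < y2) (h3 : 0 < y3) (hy31 : y3 ≤ y1) :
    IsPA [y1, y2, y3] [1, y3 + 1, 1] := by
  set m := y1 + y2 + y3 with hm
  have e1 : parkOne m ∅ 1 y1 = some (Finset.Ico 1 (1 + y1)) := parkOne_empty m 1 y1 (by omega)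
  have e2 : parkOne m (Finset.Ico 1 (1 + y1)) (y3 + 1) y2 =
      some (Finset.Ico 1 (1 + y1) ∪ Finset.Ico (y1 + 1) (y1 + 1 + y2)) := by
    apply parkOne_eq_some m _ (y3 + 1) y2 (y1 + 1) (by omega) (by omega)
    · intro k hk; simp only [Finset.mem_Ico] at hk ⊢; omega
    · intro j' ha hb
      exact ⟨j', by omega, by omega, by simp only [Finset.mem_Ico]; omega⟩
  have e3 : parkOne m (Finset.Ico 1 (1 + y1) ∪ Finset.Ico (y1 + 1) (y1 + 1 + y2)) 1 y3 =
      some ((Finset.Ico 1 (1 + y1) ∪ Finset.Ico (y1 + 1) (y1 + 1 + y2)) ∪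
        Finset.Ico (y1 + y2 + 1) (y1 + y2 + 1 + y3)) := by
    apply parkOne_eq_some m _ 1 y3 (y1 + y2 + 1) (by omega) (by omega)
    · intro k hk; simp only [Finset.mem_union, Finset.mem_Ico] at hk ⊢; omega
    · intro j' ha hb
      exact ⟨j', by omega, by omega, by simp only [Finset.mem_union, Finset.mem_Ico]; omega⟩
  apply isPA_of <;> try (constructor <;> omega)
  simp [parkList, ← hm, e1, e2, e3]

lemma S1c (h1 : 0 < y1) (h2 : 0 < y2) (h3 : 0 < y3) :
    IsPA [y1, y2, y3] [y2 + 1, 1, 1] := by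
  set m := y1 + y2 + y3 with hm
  have e1 : parkOne m ∅ (y2 + 1) y1 = some (Finset.Ico (y2 + 1) (y2 + 1 + y1)) :=
    parkOne_empty m (y2 + 1) y1 (by omega)
  have e2 : parkOne m (Finset.Ico (y2 + 1) (y2 + 1 + y1)) 1 y2 =
      some (Finset.Ico (y2 + 1) (y2 + 1 + y1) ∪ Finset.Ico 1 (1 + y2)) := by
    apply parkOne_eq_some m _ 1 y2 1 le_rfl (by omega)
    · intro k hk; simp only [Finset.mem_Ico] at hk ⊢; omega
    · intro j' ha hb; exact absurd ha (by omega)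
  have e3 : parkOne m (Finset.Ico (y2 + 1) (y2 + 1 + y1) ∪ Finset.Ico 1 (1 + y2)) 1 y3 =
      some ((Finset.Ico (y2 + 1) (y2 + 1 + y1) ∪ Finset.Ico 1 (1 + y2)) ∪
        Finset.Ico (y1 + y2 + 1) (y1 + y2 + 1 + y3)) := by
    apply parkOne_eq_some m _ 1 y3 (y1 + y2 + 1) (by omega) (by omega)
    · intro k hk; simp only [Finset.mem_union, Finset.mem_Ico] at hk ⊢; omega
    · intro j' ha hb
      exact ⟨j', by omega, by omega, by simp only [Finset.mem_union, Finset.mem_Ico]; omega⟩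
  apply isPA_of <;> try (constructor <;> omega)
  simp [parkList, ← hm, e1, e2, e3]

lemma S2c (h1 : 0 < y1) (h2 : 0 < y2) (h3 : 0 < y3) (hy31 : y3 ≤ y1) (hy32 : y3 < y2) :
    IsPA [y1, y2, y3] [y3 + 1, 1, 1] := by
  set m := y1 + y2 + y3 with hm
  have e1 : parkOne m ∅ (y3 + 1) y1 = some (Finset.Ico (y3 + 1) (y3 + 1 + y1)) :=
    parkOne_empty m (y3 + 1) y1 (by omega)
  have e2 : parkOne m (Finset.Ico (y3 + 1) (y3 + 1 + y1)) 1 y2 =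
      some (Finset.Ico (y3 + 1) (y3 + 1 + y1) ∪ Finset.Ico (y1 + y3 + 1) (y1 + y3 + 1 + y2)) := by
    apply parkOne_eq_some m _ 1 y2 (y1 + y3 + 1) (by omega) (by omega)
    · intro k hk; simp only [Finset.mem_Ico] at hk ⊢; omega
    · intro j' ha hb
      rcases le_or_gt j' y3 with h | h
      · exact ⟨y3 + 1, by omega, by omega, by simp only [Finset.mem_Ico]; omega⟩
      · exact ⟨j', by omega, by omega, by simp only [Finset.mem_Ico]; omega⟩
  have e3 : parkOne m (Finset.Ico (y3 + 1) (y3 + 1 + y1) ∪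
        Finset.Ico (y1 + y3 + 1) (y1 + y3 + 1 + y2)) 1 y3 =
      some ((Finset.Ico (y3 + 1) (y3 + 1 + y1) ∪ Finset.Ico (y1 + y3 + 1) (y1 + y3 + 1 + y2)) ∪
        Finset.Ico 1 (1 + y3)) := by
    apply parkOne_eq_some m _ 1 y3 1 le_rfl (by omega)
    · intro k hk; simp only [Finset.mem_union, Finset.mem_Ico] at hk ⊢; omega
    · intro j' ha hb; exact absurd ha (by omega)
  apply isPA_of <;> try (constructor <;> omega)
  simp [parkList, ← hm, e1, e2, e3]

lemma S3b (h1 : 0 < y1) (h2 : 0 < y2) (h3 : 0 < y3) (h12 : y1 < y2) (heq : y1 + y3 = y2) :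
    IsPA [y1, y2, y3] [1, y2 + 1, 1] := by
  set m := y1 + y2 + y3 with hm
  have e1 : parkOne m ∅ 1 y1 = some (Finset.Ico 1 (1 + y1)) := parkOne_empty m 1 y1 (by omega)
  have e2 : parkOne m (Finset.Ico 1 (1 + y1)) (y2 + 1) y2 =
      some (Finset.Ico 1 (1 + y1) ∪ Finset.Ico (y2 + 1) (y2 + 1 + y2)) := by
    apply parkOne_eq_some m _ (y2 + 1) y2 (y2 + 1) le_rfl (by omega)
    · intro k hk; simp only [Finset.mem_Ico] at hk ⊢; omega
    · intro j' ha hb; exact absurd ha (by omega)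
  have e3 : parkOne m (Finset.Ico 1 (1 + y1) ∪ Finset.Ico (y2 + 1) (y2 + 1 + y2)) 1 y3 =
      some ((Finset.Ico 1 (1 + y1) ∪ Finset.Ico (y2 + 1) (y2 + 1 + y2)) ∪
        Finset.Ico (y1 + 1) (y1 + 1 + y3)) := by
    apply parkOne_eq_some m _ 1 y3 (y1 + 1) (by omega) (by omega)
    · intro k hk; simp only [Finset.mem_union, Finset.mem_Ico] at hk ⊢; omega
    · intro j' ha hb
      exact ⟨j', by omega, by omega, by simp only [Finset.mem_union, Finset.mem_Ico]; omega⟩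
  apply isPA_of <;> try (constructor <;> omega)
  simp [parkList, ← hm, e1, e2, e3]

end Scenarios

section Fail
variable (y1 y2 y3 : ℕ)

lemma Ffit (q s t : ℕ) (hq : y1 + y2 + y3 + 1 < q + y2) :
    parkList (y1 + y2 + y3) [(s, y1), (q, y2), (t, y3)] ∅ = none := by
  set m := y1 + y2 + y3 with hm
  rcases e1 : parkOne m ∅ s y1 with _ | o1
  · simp [parkList, e1]
  · have e2 : parkOne m o1 q y2 = none :=
      parkOne_eq_none m o1 q y2 (fun j hj1 hj2 => absurd hj2 (by omega))
    simp [parkList, e1, e2]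

lemma F1 (h1 : 0 < y1) (h2 : 0 < y2) (h3 : 0 < y3) (h12 : y1 < y2) (h13 : y1 < y3)
    (hlt : y2 < y1 + y3) :
    parkList (y1 + y2 + y3) [(1, y1), (y2 + 1, y2), (1, y3)] ∅ = none := by
  set m := y1 + y2 + y3 with hm
  have e1 : parkOne m ∅ 1 y1 = some (Finset.Ico 1 (1 + y1)) := parkOne_empty m 1 y1 (by omega)
  have e2 : parkOne m (Finset.Ico 1 (1 + y1)) (y2 + 1) y2 =
      some (Finset.Ico 1 (1 + y1) ∪ Finset.Ico (y2 + 1) (y2 + 1 + y2)) := by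
    apply parkOne_eq_some m _ (y2 + 1) y2 (y2 + 1) le_rfl (by omega)
    · intro k hk; simp only [Finset.mem_Ico] at hk ⊢; omega
    · intro j' ha hb; exact absurd ha (by omega)
  have e3 : parkOne m (Finset.Ico 1 (1 + y1) ∪ Finset.Ico (y2 + 1) (y2 + 1 + y2)) 1 y3 = none := by
    apply parkOne_eq_none
    intro j hj1 hj2
    rcases le_or_gt j y1 with h | h
    · exact ⟨j, le_rfl, by omega, by simp only [Finset.mem_union, Finset.mem_Ico]; omega⟩
    rcases le_or_gt j y2 with h' | h'
    · exact ⟨y2 + 1, by omega, by omega, by simp only [Finset.mem_union, Finset.mem_Ico]; omega⟩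
    rcases le_or_gt j (y2 + y2) with h'' | h''
    · exact ⟨j, le_rfl, by omega, by simp only [Finset.mem_union, Finset.mem_Ico]; omega⟩
    · exact absurd hj2 (by omega)
  simp [parkList, e1, e2, e3]

lemma F2 (h1 : 0 < y1) (h2 : 0 < y2) (h3 : 0 < y3) (h12 : y1 < y2) (h13 : y1 < y3) :
    parkList (y1 + y2 + y3) [(1, y1), (y3 + 1, y2), (1, y3)] ∅ = none := by
  set m := y1 + y2 + y3 with hm
  have e1 : parkOne m ∅ 1 y1 = some (Finset.Ico 1 (1 + y1)) := parkOne_empty m 1 y1 (by omega)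
  have e2 : parkOne m (Finset.Ico 1 (1 + y1)) (y3 + 1) y2 =
      some (Finset.Ico 1 (1 + y1) ∪ Finset.Ico (y3 + 1) (y3 + 1 + y2)) := by
    apply parkOne_eq_some m _ (y3 + 1) y2 (y3 + 1) le_rfl (by omega)
    · intro k hk; simp only [Finset.mem_Ico] at hk ⊢; omega
    · intro j' ha hb; exact absurd ha (by omega)
  have e3 : parkOne m (Finset.Ico 1 (1 + y1) ∪ Finset.Ico (y3 + 1) (y3 + 1 + y2)) 1 y3 = none := by
    apply parkOne_eq_none
    intro j hj1 hj2
    rcases le_or_gt j y1 with h | h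
    · exact ⟨j, le_rfl, by omega, by simp only [Finset.mem_union, Finset.mem_Ico]; omega⟩
    rcases le_or_gt j y3 with h' | h'
    · exact ⟨y3 + 1, by omega, by omega, by simp only [Finset.mem_union, Finset.mem_Ico]; omega⟩
    rcases le_or_gt j (y3 + y2) with h'' | h''
    · exact ⟨j, le_rfl, by omega, by simp only [Finset.mem_union, Finset.mem_Ico]; omega⟩
    · exact absurd hj2 (by omega)
  simp [parkList, e1, e2, e3]

lemma F3 (h1 : 0 < y1) (h2 : 0 < y2) (h3 : 0 < y3) (h12 : y1 < y2) (h13 : y1 < y3)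
    (hlt : y2 < y1 + y3) :
    parkList (y1 + y2 + y3) [(1, y1), (y2 + 1, y2), (y2 + 1, y3)] ∅ = none := by
  set m := y1 + y2 + y3 with hm
  have e1 : parkOne m ∅ 1 y1 = some (Finset.Ico 1 (1 + y1)) := parkOne_empty m 1 y1 (by omega)
  have e2 : parkOne m (Finset.Ico 1 (1 + y1)) (y2 + 1) y2 =
      some (Finset.Ico 1 (1 + y1) ∪ Finset.Ico (y2 + 1) (y2 + 1 + y2)) := by
    apply parkOne_eq_some m _ (y2 + 1) y2 (y2 + 1) le_rfl (by omega)
    · intro k hk; simp only [Finset.mem_Ico] at hk ⊢; omega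
    · intro j' ha hb; exact absurd ha (by omega)
  have e3 : parkOne m (Finset.Ico 1 (1 + y1) ∪ Finset.Ico (y2 + 1) (y2 + 1 + y2))
      (y2 + 1) y3 = none := by
    apply parkOne_eq_none
    intro j hj1 hj2
    rcases le_or_gt j (y2 + y2) with h | h
    · exact ⟨j, le_rfl, by omega, by simp only [Finset.mem_union, Finset.mem_Ico]; omega⟩
    · exact absurd hj2 (by omega)
  simp [parkList, e1, e2, e3]

lemma F4 (h1 : 0 < y1) (h2 : 0 < y2) (h3 : 0 < y3) (h12 : y1 < y2) (h13 : y1 < y3) :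
    parkList (y1 + y2 + y3) [(1, y1), (y3 + 1, y2), (y3 + 1, y3)] ∅ = none := by
  set m := y1 + y2 + y3 with hm
  have e1 : parkOne m ∅ 1 y1 = some (Finset.Ico 1 (1 + y1)) := parkOne_empty m 1 y1 (by omega)
  have e2 : parkOne m (Finset.Ico 1 (1 + y1)) (y3 + 1) y2 =
      some (Finset.Ico 1 (1 + y1) ∪ Finset.Ico (y3 + 1) (y3 + 1 + y2)) := by
    apply parkOne_eq_some m _ (y3 + 1) y2 (y3 + 1) le_rfl (by omega)
    · intro k hk; simp only [Finset.mem_Ico] at hk ⊢; omega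
    · intro j' ha hb; exact absurd ha (by omega)
  have e3 : parkOne m (Finset.Ico 1 (1 + y1) ∪ Finset.Ico (y3 + 1) (y3 + 1 + y2))
      (y3 + 1) y3 = none := by
    apply parkOne_eq_none
    intro j hj1 hj2
    rcases le_or_gt j (y3 + y2) with h | h
    · exact ⟨j, le_rfl, by omega, by simp only [Finset.mem_union, Finset.mem_Ico]; omega⟩
    · exact absurd hj2 (by omega)
  simp [parkList, e1, e2, e3]

lemma F5 (h1 : 0 < y1) (h2 : 0 < y2) (h3 : 0 < y3) (h12 : y1 < y2) (h13 : y1 < y3)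
    (hlt : y2 < y1 + y3) :
    parkList (y1 + y2 + y3) [(1, y1), (y2 + 1, y2), (y3 + 1, y3)] ∅ = none := by
  set m := y1 + y2 + y3 with hm
  have e1 : parkOne m ∅ 1 y1 = some (Finset.Ico 1 (1 + y1)) := parkOne_empty m 1 y1 (by omega)
  have e2 : parkOne m (Finset.Ico 1 (1 + y1)) (y2 + 1) y2 =
      some (Finset.Ico 1 (1 + y1) ∪ Finset.Ico (y2 + 1) (y2 + 1 + y2)) := by
    apply parkOne_eq_some m _ (y2 + 1) y2 (y2 + 1) le_rfl (by omega)
    · intro k hk; simp only [Finset.mem_Ico] at hk ⊢; omega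
    · intro j' ha hb; exact absurd ha (by omega)
  have e3 : parkOne m (Finset.Ico 1 (1 + y1) ∪ Finset.Ico (y2 + 1) (y2 + 1 + y2))
      (y3 + 1) y3 = none := by
    apply parkOne_eq_none
    intro j hj1 hj2
    rcases le_or_gt j y2 with h | h
    · exact ⟨y2 + 1, by omega, by omega, by simp only [Finset.mem_union, Finset.mem_Ico]; omega⟩
    rcases le_or_gt j (y2 + y2) with h' | h'
    · exact ⟨j, le_rfl, by omega, by simp only [Finset.mem_union, Finset.mem_Ico]; omega⟩
    · exact absurd hj2 (by omega)
  simp [parkList, e1, e2, e3]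

end Fail

lemma cons_zero_inj {a b : ℕ} (h : (a ::ₘ 0 : Multiset ℕ) = b ::ₘ 0) : a = b := by
  have : a ∈ (b ::ₘ 0 : Multiset ℕ) := h ▸ Multiset.mem_cons_self a 0
  rcases Multiset.mem_cons.mp this with h' | h'
  · exact h'
  · exact absurd h' (Multiset.notMem_zero a)

lemma pair_eq {v w b c : ℕ} (h : (v ::ₘ w ::ₘ 0 : Multiset ℕ) = b ::ₘ c ::ₘ 0) :
    (v = b ∧ w = c) ∨ (v = c ∧ w = b) := by
  have hv : v ∈ (b ::ₘ c ::ₘ 0 : Multiset ℕ) := h ▸ Multiset.mem_cons_self v _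
  rcases Multiset.mem_cons.mp hv with rfl | hv1
  · exact Or.inl ⟨rfl, cons_zero_inj ((Multiset.cons_inj_right v).mp h)⟩
  rcases Multiset.mem_cons.mp hv1 with rfl | hv2
  · rw [Multiset.cons_swap b v] at h
    exact Or.inr ⟨rfl, cons_zero_inj ((Multiset.cons_inj_right v).mp h)⟩
  · exact absurd hv2 (Multiset.notMem_zero v)

lemma perm3 {x : List ℕ} {a b c : ℕ} (h : x.Perm [a, b, c]) :
    x = [a, b, c] ∨ x = [a, c, b] ∨ x = [b, a, c] ∨ x = [b, c, a] ∨
      x = [c, a, b] ∨ x = [c, b, a] := by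
  have hlen : x.length = 3 := by simpa using h.length_eq
  obtain ⟨u, v, w, rfl⟩ := List.length_eq_three.mp hlen
  have hm : (u ::ₘ v ::ₘ w ::ₘ 0 : Multiset ℕ) = a ::ₘ b ::ₘ c ::ₘ 0 := by
    have h2 := Multiset.coe_eq_coe.mpr h
    simpa [← Multiset.cons_coe] using h2
  have hu : u ∈ (a ::ₘ b ::ₘ c ::ₘ 0 : Multiset ℕ) := hm ▸ Multiset.mem_cons_self u _
  rcases Multiset.mem_cons.mp hu with rfl | hu1
  · rcases pair_eq ((Multiset.cons_inj_right u).mp hm) with ⟨rfl, rfl⟩ | ⟨rfl, rfl⟩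
    · exact Or.inl rfl
    · exact Or.inr (Or.inl rfl)
  rcases Multiset.mem_cons.mp hu1 with rfl | hu2
  · rw [Multiset.cons_swap a u] at hm
    rcases pair_eq ((Multiset.cons_inj_right u).mp hm) with ⟨rfl, rfl⟩ | ⟨rfl, rfl⟩
    · exact Or.inr (Or.inr (Or.inl rfl))
    · exact Or.inr (Or.inr (Or.inr (Or.inl rfl)))
  rcases Multiset.mem_cons.mp hu2 with rfl | hu3
  · rw [Multiset.cons_swap b u, Multiset.cons_swap a u] at hm
    rcases pair_eq ((Multiset.cons_inj_right u).mp hm) with ⟨rfl, rfl⟩ | ⟨rfl, rfl⟩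
    · exact Or.inr (Or.inr (Or.inr (Or.inr (Or.inl rfl))))
    · exact Or.inr (Or.inr (Or.inr (Or.inr (Or.inr rfl))))
  · exact absurd hu3 (Multiset.notMem_zero u)

theorem stmt15 (y1 y2 y3 : ℕ) (h1 : 0 < y1) (h2 : 0 < y2) (h3 : 0 < y3) :
    MinInv [y1, y2, y3] ↔ y1 < y2 ∧ y1 < y3 ∧ y1 + y3 ≠ y2 := by
  constructor
  · intro hmi
    by_contra hnc
    have hwit : ∃ cw : ℕ, 2 ≤ cw ∧ IsPA [y1, y2, y3] [1, 1, cw] ∧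
        IsPA [y1, y2, y3] [1, cw, 1] ∧ IsPA [y1, y2, y3] [cw, 1, 1] := by
      rcases le_or_gt y2 y1 with hA | hA
      · rcases le_or_gt y2 y3 with hB | hB
        · exact ⟨y2 + 1, by omega, S1a y1 y2 y3 h1 h2 h3 (by omega),
            S1b y1 y2 y3 h1 h2 h3 hA, S1c y1 y2 y3 h1 h2 h3⟩
        · exact ⟨y3 + 1, by omega, S2a y1 y2 y3 h1 h2 h3 (by omega),
            S2b y1 y2 y3 h1 h2 h3 (by omega), S2c y1 y2 y3 h1 h2 h3 (by omega) hB⟩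
      · rcases le_or_gt y3 y1 with hB | hB
        · exact ⟨y3 + 1, by omega, S2a y1 y2 y3 h1 h2 h3 hB,
            S2b y1 y2 y3 h1 h2 h3 hB, S2c y1 y2 y3 h1 h2 h3 hB (by omega)⟩
        · have heq : y1 + y3 = y2 := by
            by_contra hne
            exact hnc ⟨hA, hB, hne⟩
          exact ⟨y2 + 1, by omega, S1a y1 y2 y3 h1 h2 h3 (by omega),
            S3b y1 y2 y3 h1 h2 h3 hA heq, S1c y1 y2 y3 h1 h2 h3⟩
    obtain ⟨cw, hc2, hSa, hSb, hSc⟩ := hwit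
    have hmem : [1, 1, cw] ∈ PAinv [y1, y2, y3] := by
      intro x' hp
      rcases perm3 hp with rfl | rfl | rfl | rfl | rfl | rfl
      · exact hSa
      · exact hSb
      · exact hSa
      · exact hSb
      · exact hSc
      · exact hSc
    rw [MinInv] at hmi
    rw [hmi] at hmem
    have heq : [1, 1, cw] = List.replicate ([y1, y2, y3] : List ℕ).length 1 := hmem
    have : cw = 1 := by
      have h3' : List.replicate ([y1, y2, y3] : List ℕ).length 1 = [1, 1, 1] := rfl
      rw [h3'] at heq
      injection heq with _ heq'
      injection heq' with _ heq''
      injection heq'' with heq''' _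
    omega
  · rintro ⟨h12, h13, hne⟩
    rw [MinInv]
    ext x
    simp only [Set.mem_singleton_iff]
    have hrep : List.replicate ([y1, y2, y3] : List ℕ).length 1 = [1, 1, 1] := rfl
    rw [hrep]
    constructor
    · intro hx
      have hx' : ∀ x', x'.Perm x → IsPA [y1, y2, y3] x' := hx
      have hself : IsPA [y1, y2, y3] x := hx' x (List.Perm.refl x)
      have hlen : x.length = 3 := by simpa using hself.1
      obtain ⟨a, b, c, rfl⟩ := List.length_eq_three.mp hlen
      have pid : List.Perm [a, b, c] [a, b, c] := List.Perm.refl _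
      have pswap : List.Perm [b, a, c] [a, b, c] := List.Perm.swap a b [c]
      have p23 : List.Perm [a, c, b] [a, b, c] := List.Perm.cons a (List.Perm.swap b c [])
      have prot : List.Perm [b, c, a] [a, b, c] :=
        (List.Perm.cons b (List.Perm.swap a c [])).trans pswap
      have prot2 : List.Perm [c, a, b] [a, b, c] := (List.Perm.swap a c [b]).trans p23
      have p13 : List.Perm [c, b, a] [a, b, c] := (List.Perm.swap b c [a]).trans prot
      have hsum : ([y1, y2, y3] : List ℕ).sum = y1 + y2 + y3 := by
        simp only [List.sum_cons, List.sum_nil]; omega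
      have HP : ∀ u v w : ℕ, List.Perm [u, v, w] [a, b, c] →
          (parkList (y1 + y2 + y3) [(u, y1), (v, y2), (w, y3)] ∅).isSome := by
        intro u v w hp
        have h := (hx' _ hp).2.2
        have hz : ([u, v, w].zip [y1, y2, y3]) = [(u, y1), (v, y2), (w, y3)] := rfl
        rwa [hz, hsum] at h
      have HN : ∀ u v w : ℕ, List.Perm [u, v, w] [a, b, c] →
          parkList (y1 + y2 + y3) [(u, y1), (v, y2), (w, y3)] ∅ = none → False := by
        intro u v w hp hn
        exact not_isPA y1 y2 y3 u v w hn (hx' _ hp)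
      have ha1 : 1 ≤ a := (hself.2.1 a (by simp)).1
      have hb1 : 1 ≤ b := (hself.2.1 b (by simp)).1
      have hc1 : 1 ≤ c := (hself.2.1 c (by simp)).1
      have K1 := key y1 y2 y3 a b c h1 h2 h3 ha1 hb1 hc1 (HP a b c pid)
      have K2 := key y1 y2 y3 b a c h1 h2 h3 hb1 ha1 hc1 (HP b a c pswap)
      have K3 := key y1 y2 y3 c b a h1 h2 h3 hc1 hb1 ha1 (HP c b a p13)
      have Fa : a + y2 ≤ y1 + y2 + y3 + 1 := by
        by_contra hq
        exact HN b a c pswap (Ffit y1 y2 y3 a b c (by omega))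
      have Fb : b + y2 ≤ y1 + y2 + y3 + 1 := by
        by_contra hq
        exact HN a b c pid (Ffit y1 y2 y3 b a c (by omega))
      have Fc : c + y2 ≤ y1 + y2 + y3 + 1 := by
        by_contra hq
        exact HN a c b p23 (Ffit y1 y2 y3 c a b (by omega))
      have h1s : a = 1 ∨ b = 1 ∨ c = 1 := K1.2
      have ha' : a = 1 ∨ a = y2 + 1 ∨ a = y3 + 1 := by
        rcases K1.1 with h | h | h | h <;> omega
      have hb' : b = 1 ∨ b = y2 + 1 ∨ b = y3 + 1 := by
        rcases K2.1 with h | h | h | h <;> omega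
      have hc' : c = 1 ∨ c = y2 + 1 ∨ c = y3 + 1 := by
        rcases K3.1 with h | h | h | h <;> omega
      rcases ha' with rfl | rfl | rfl <;> rcases hb' with rfl | rfl | rfl <;>
        rcases hc' with rfl | rfl | rfl
      · rfl
      · exact (HN 1 (y2 + 1) 1 p23 (F1 y1 y2 y3 h1 h2 h3 h12 h13 (by omega))).elim
      · exact (HN 1 (y3 + 1) 1 p23 (F2 y1 y2 y3 h1 h2 h3 h12 h13)).elim
      · exact (HN 1 (y2 + 1) 1 pid (F1 y1 y2 y3 h1 h2 h3 h12 h13 (by omega))).elim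
      · exact (HN 1 (y2 + 1) (y2 + 1) pid (F3 y1 y2 y3 h1 h2 h3 h12 h13 (by omega))).elim
      · exact (HN 1 (y2 + 1) (y3 + 1) pid (F5 y1 y2 y3 h1 h2 h3 h12 h13 (by omega))).elim
      · exact (HN 1 (y3 + 1) 1 pid (F2 y1 y2 y3 h1 h2 h3 h12 h13)).elim
      · exact (HN 1 (y2 + 1) (y3 + 1) p23 (F5 y1 y2 y3 h1 h2 h3 h12 h13 (by omega))).elim
      · exact (HN 1 (y3 + 1) (y3 + 1) pid (F4 y1 y2 y3 h1 h2 h3 h12 h13)).elim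
      · exact (HN 1 (y2 + 1) 1 pswap (F1 y1 y2 y3 h1 h2 h3 h12 h13 (by omega))).elim
      · exact (HN 1 (y2 + 1) (y2 + 1) pswap (F3 y1 y2 y3 h1 h2 h3 h12 h13 (by omega))).elim
      · exact (HN 1 (y2 + 1) (y3 + 1) pswap (F5 y1 y2 y3 h1 h2 h3 h12 h13 (by omega))).elim
      · exact (HN 1 (y2 + 1) (y2 + 1) prot2 (F3 y1 y2 y3 h1 h2 h3 h12 h13 (by omega))).elim
      · exact (by omega : False).elim
      · exact (by omega : False).elim
      · exact (HN 1 (y2 + 1) (y3 + 1) prot2 (F5 y1 y2 y3 h1 h2 h3 h12 h13 (by omega))).elim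
      · exact (by omega : False).elim
      · exact (by omega : False).elim
      · exact (HN 1 (y3 + 1) 1 pswap (F2 y1 y2 y3 h1 h2 h3 h12 h13)).elim
      · exact (HN 1 (y2 + 1) (y3 + 1) prot (F5 y1 y2 y3 h1 h2 h3 h12 h13 (by omega))).elim
      · exact (HN 1 (y3 + 1) (y3 + 1) pswap (F4 y1 y2 y3 h1 h2 h3 h12 h13)).elim
      · exact (HN 1 (y2 + 1) (y3 + 1) p13 (F5 y1 y2 y3 h1 h2 h3 h12 h13 (by omega))).elim
      · exact (by omega : False).elim
      · exact (by omega : False).elim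
      · exact (HN 1 (y3 + 1) (y3 + 1) prot2 (F4 y1 y2 y3 h1 h2 h3 h12 h13)).elim
      · exact (by omega : False).elim
      · exact (by omega : False).elim
    · intro hx
      subst hx
      intro x' hp
      rcases perm3 hp with rfl | rfl | rfl | rfl | rfl | rfl <;>
        exact S0 y1 y2 y3 h1 h2 h3
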